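/- Let X be an order-normal topological space with RO(X) ⊆ 𝒪ℛ𝒪(X). Then (RO(X), ≪) is a de Vries algebra, where U ≪ W iff closure(U) ⊆ ↓W. -/
import Mathlib


/-- The specialization preorder: `x ≤ y` iff every open set containing `x` contains `y`. -/
def specLE {X : Type*} [TopologicalSpace X] (x y : X) : Prop :=
  ∀ U : Set X, IsOpen U → x ∈ U → y ∈ U

/-- Downward closure of a set in the specialization preorder. -/
def dcl {X : Type*} [TopologicalSpace X] (A : Set X) : Set X :=
  {x : X | ∃ y ∈ A, specLE x y}

/-- Interior in the upset topology of the specialization preorder. -/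
def upInt {X : Type*} [TopologicalSpace X] (A : Set X) : Set X :=
  {x : X | ∀ y : X, specLE x y → y ∈ A}

/-- Regular open: `U` equals the interior of its closure. -/
def RegOpen {X : Type*} [TopologicalSpace X] (U : Set X) : Prop :=
  interior (closure U) = U

/-- Regular closed: `A` equals the closure of its interior. -/
def RegClosed {X : Type*} [TopologicalSpace X] (A : Set X) : Prop :=
  closure (interior A) = A

/-- Order-regular open: the upset-interior of the downward closure of `U` equals `U`. -/
def OrdRegOpen {X : Type*} [TopologicalSpace X] (U : Set X) : Prop :=
  upInt (dcl U) = U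

/-- Order-normal space: any closed `A` and regular closed `B` with `A` disjoint from the
upset-interior of `B` are separated by disjoint opens `U`, `W` with `A ⊆ ↓U` and
`upInt B ⊆ W`. -/
def OrderNormal (X : Type*) [TopologicalSpace X] : Prop :=
  ∀ A B : Set X, IsClosed A → RegClosed B → Disjoint A (upInt B) →
    ∃ U W : Set X, IsOpen U ∧ IsOpen W ∧ Disjoint U W ∧ A ⊆ dcl U ∧ upInt B ⊆ W

/-- Order-regular space. -/
def OrderRegular (X : Type*) [TopologicalSpace X] : Prop :=
  ∀ (A : Set X) (x : X), IsClosed A → x ∉ upInt A →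
    ∃ U W : Set X, IsOpen U ∧ IsOpen W ∧ Disjoint U W ∧ x ∈ U ∧ upInt A ⊆ W

/-- The subordination relation `U ≪ W`: the closure of `U` is contained in the
downward closure of `W`. -/
def ll {X : Type*} [TopologicalSpace X] (U W : Set X) : Prop :=
  closure U ⊆ dcl W

section Aux

variable {X : Type*} [TopologicalSpace X]

lemma specLE_refl' (x : X) : specLE x x := fun _ _ h => h

lemma dcl_mono {A B : Set X} (h : A ⊆ B) : dcl A ⊆ dcl B :=
  fun _ ⟨y, hyA, hxy⟩ => ⟨y, h hyA, hxy⟩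

lemma regOpen_isOpen {U : Set X} (hU : RegOpen U) : IsOpen U := by
  rw [← hU]; exact isOpen_interior

lemma regClosed_compl {W : Set X} (hW : RegOpen W) : RegClosed Wᶜ := by
  unfold RegClosed
  rw [interior_compl, closure_compl, hW]

lemma closure_cc {W : Set X} (hW : RegOpen W) : closure ((closure W)ᶜ) = Wᶜ := by
  rw [closure_compl, hW]

lemma regOpen_cc {W : Set X} (hW : RegOpen W) : RegOpen ((closure W)ᶜ) := by
  unfold RegOpen
  rw [closure_cc hW, interior_compl]

lemma clIntCl {G : Set X} (hG : IsOpen G) : closure (interior (closure G)) = closure G := by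
  apply subset_antisymm
  · have : closure (interior (closure G)) ⊆ closure (closure G) :=
      closure_mono interior_subset
    rwa [closure_closure] at this
  · exact closure_mono (interior_maximal subset_closure hG)

lemma regOpen_intCl {G : Set X} (hG : IsOpen G) : RegOpen (interior (closure G)) := by
  unfold RegOpen
  rw [clIntCl hG]

/-- Axiom (A5) : the key lemma, proved using `hRO`. -/
lemma lemA5 (hRO : ∀ U : Set X, RegOpen U → OrdRegOpen U) {U W : Set X}
    (hW : RegOpen W) (h : ll U W) : ll (closure W)ᶜ (closure U)ᶜ := by
  intro x hx
  rw [closure_cc hW] at hx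
  have hx' : x ∉ upInt (dcl W) := by
    rw [hRO W hW]; exact hx
  have : ¬ ∀ y : X, specLE x y → y ∈ dcl W := hx'
  push_neg at this
  obtain ⟨y, hxy, hyd⟩ := this
  refine ⟨y, ?_, hxy⟩
  intro hyc
  exact hyd (h hyc)

/-- Interpolation lemma from order-normality. -/
lemma interp (hN : OrderNormal X) {C W : Set X} (hC : IsClosed C) (hW : RegOpen W)
    (h : C ⊆ dcl W) : ∃ G : Set X, IsOpen G ∧ C ⊆ dcl G ∧ closure G ⊆ dcl W := by
  have hdisj : Disjoint C (upInt Wᶜ) := by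
    rw [Set.disjoint_left]
    intro p hp hup
    obtain ⟨y, hyW, hpy⟩ := h hp
    exact hup y hpy hyW
  obtain ⟨G, H, hG, hH, hGH, hCG, hHsub⟩ := hN C Wᶜ hC (regClosed_compl hW) hdisj
  refine ⟨G, hG, hCG, ?_⟩
  intro p hp
  by_contra hpd
  have hup : p ∈ upInt (Wᶜ) := by
    intro y hpy
    intro hyW
    exact hpd ⟨y, hyW, hpy⟩
  obtain ⟨z, hzH, hzG⟩ := mem_closure_iff.mp hp H hH (hHsub hup)
  exact Set.disjoint_left.mp hGH hzG hzH

end Aux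

/-- `(RO(X), ≪)` is a de Vries algebra: the regular open sets (a complete Boolean
algebra with meet `∩`, complement `U^⊥ = (closure U)ᶜ`, `0 = ∅`, `1 = univ`)
satisfy axioms (A1)-(A7) for the relation `≪`. -/
theorem stmt13 (X : Type*) [TopologicalSpace X] (hN : OrderNormal X)
    (hRO : ∀ U : Set X, RegOpen U → OrdRegOpen U) :
    -- (A1)
    ll (Set.univ : Set X) Set.univ ∧
    -- (A2)
    (∀ U W : Set X, RegOpen U → RegOpen W → ll U W → U ⊆ W) ∧
    -- (A3)
    (∀ U₁ U₂ W₁ W₂ : Set X, RegOpen U₁ → RegOpen U₂ → RegOpen W₁ → RegOpen W₂ →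
      U₁ ⊆ U₂ → ll U₂ W₁ → W₁ ⊆ W₂ → ll U₁ W₂) ∧
    -- (A4)
    (∀ U W₁ W₂ : Set X, RegOpen U → RegOpen W₁ → RegOpen W₂ →
      ll U W₁ → ll U W₂ → ll U (W₁ ∩ W₂)) ∧
    -- (A5)
    (∀ U W : Set X, RegOpen U → RegOpen W → ll U W → ll (closure W)ᶜ (closure U)ᶜ) ∧
    -- (A6)
    (∀ U W : Set X, RegOpen U → RegOpen W → ll U W →
      ∃ Z : Set X, RegOpen Z ∧ ll U Z ∧ ll Z W) ∧
    -- (A7)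
    (∀ U : Set X, RegOpen U → U ≠ ∅ → ∃ Z : Set X, RegOpen Z ∧ Z ≠ ∅ ∧ ll Z U) := by
  refine ⟨?_, ?_, ?_, ?_, ?_, ?_, ?_⟩
  · -- (A1)
    intro x _
    exact ⟨x, Set.mem_univ x, specLE_refl' x⟩
  · -- (A2)
    intro U W hU hW h x hx
    rw [← hRO W hW]
    intro y hxy
    exact h (subset_closure (hxy U (regOpen_isOpen hU) hx))
  · -- (A3)
    intro U₁ U₂ W₁ W₂ _ _ _ _ h12 h hsub
    intro x hx
    exact dcl_mono hsub (h (closure_mono h12 hx))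
  · -- (A4)
    intro U W₁ W₂ hU hW₁ hW₂ h₁ h₂
    have hA5₁ : ll (closure W₁)ᶜ (closure U)ᶜ := lemA5 hRO hW₁ h₁
    have hA5₂ : ll (closure W₂)ᶜ (closure U)ᶜ := lemA5 hRO hW₂ h₂
    set T : Set X := (closure W₁)ᶜ ∪ (closure W₂)ᶜ with hT
    have hTopen : IsOpen T :=
      (isClosed_closure.isOpen_compl).union (isClosed_closure.isOpen_compl)
    set J : Set X := interior (closure T) with hJdef
    have hJ : RegOpen J := regOpen_intCl hTopen
    have hclJ : closure J = closure T := clIntCl hTopen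
    have hJn : ll J (closure U)ᶜ := by
      intro x hx
      rw [hclJ, hT, closure_union] at hx
      rcases hx with hx | hx
      · exact hA5₁ hx
      · exact hA5₂ hx
    have hnU : RegOpen ((closure U)ᶜ) := regOpen_cc hU
    have final := lemA5 hRO hnU hJn
    have e1 : (closure ((closure U)ᶜ))ᶜ = U := by
      rw [closure_cc hU, compl_compl]
    have e2 : (closure J)ᶜ = W₁ ∩ W₂ := by
      rw [hclJ, hT, closure_union, Set.compl_union, closure_cc hW₁, closure_cc hW₂,
        compl_compl, compl_compl]
    rwa [e1, e2] at final
  · -- (A5)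
    intro U W _ hW h
    exact lemA5 hRO hW h
  · -- (A6)
    intro U W _ hW h
    obtain ⟨G, hG, hCG, hclG⟩ := interp hN isClosed_closure hW h
    refine ⟨interior (closure G), regOpen_intCl hG, ?_, ?_⟩
    · intro x hx
      exact dcl_mono (interior_maximal subset_closure hG) (hCG hx)
    · intro x hx
      rw [clIntCl hG] at hx
      exact hclG hx
  · -- (A7)
    intro U hU hUne
    obtain ⟨x, hx⟩ := Set.nonempty_iff_ne_empty.mpr hUne
    have hCd : closure ({x} : Set X) ⊆ dcl U := by
      intro p hp
      have hpx : specLE p x := by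
        intro O hO hpO
        obtain ⟨z, hzO, hzx⟩ := mem_closure_iff.mp hp O hO hpO
        rw [Set.mem_singleton_iff] at hzx
        rwa [← hzx]
      exact ⟨x, hx, hpx⟩
    obtain ⟨G, hG, hCG, hclG⟩ := interp hN isClosed_closure hU hCd
    obtain ⟨g, hgG, _⟩ := hCG (subset_closure rfl)
    refine ⟨interior (closure G), regOpen_intCl hG, ?_, ?_⟩
    · exact Set.Nonempty.ne_empty ⟨g, interior_maximal subset_closure hG hgG⟩
    · intro p hp
      rw [clIntCl hG] at hp
      exact hclG hp
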